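/- Let S be a positivity-preserving (Markovian) self-adjoint semigroup on L_2(X) for a σ-finite measure space X. Let A, B be measurable subsets of X with finite measure, with indicator functions 𝟙_A, 𝟙_B. If (S_t 𝟙_A, 𝟙_B) = 0 for one t > 0, then (S_t 𝟙_A, 𝟙_B) = 0 for all t > 0. -/

import Mathlib

open MeasureTheory

section AuxSemigroup

variable {X : Type*} [MeasurableSpace X] {μ : Measure X}

private lemma inner_L2_eq' (u v : Lp ℝ 2 μ) :
    inner (𝕜 := ℝ) u v = ∫ x, u x * v x ∂μ := by
  rw [MeasureTheory.L2.inner_def]; simp only [Real.inner_apply]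

private lemma integrable_mul' (u v : Lp ℝ 2 μ) :
    Integrable (fun x => u x * v x) μ :=
  by simpa only [Real.inner_apply] using L2.integrable_inner (𝕜 := ℝ) u v

private lemma inf_eq_zero_of_inner_eq_zero' {u v : Lp ℝ 2 μ} (hu : 0 ≤ u) (hv : 0 ≤ v)
    (h : inner (𝕜 := ℝ) u v = 0) : u ⊓ v = 0 := by
  have hu' : 0 ≤ᵐ[μ] ⇑u := (Lp.coeFn_nonneg u).2 hu
  have hv' : 0 ≤ᵐ[μ] ⇑v := (Lp.coeFn_nonneg v).2 hv
  have hzero : (fun x => u x * v x) =ᵐ[μ] 0 := by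
    refine (integral_eq_zero_iff_of_nonneg_ae ?_ (integrable_mul' u v)).1 ?_
    · filter_upwards [hu', hv'] with x h1 h2
      exact mul_nonneg h1 h2
    · rw [← inner_L2_eq']; exact h
  rw [Lp.eq_zero_iff_ae_eq_zero]
  filter_upwards [Lp.coeFn_inf u v, hu', hv', hzero] with x hx h1 h2 h3
  rw [hx]
  simp only [Pi.inf_apply, Pi.zero_apply]
  simp only [Pi.zero_apply] at h3
  rcases mul_eq_zero.1 h3 with h4 | h4
  · rw [h4]; exact min_eq_left h2
  · rw [h4]; exact min_eq_right h1

private lemma inner_eq_zero_of_inf_eq_zero' {u v : Lp ℝ 2 μ} (hu : 0 ≤ u) (hv : 0 ≤ v)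
    (h : u ⊓ v = 0) : inner (𝕜 := ℝ) u v = 0 := by
  rw [Lp.eq_zero_iff_ae_eq_zero] at h
  rw [inner_L2_eq']
  have hzero : (fun x => u x * v x) =ᵐ[μ] 0 := by
    filter_upwards [Lp.coeFn_inf u v, (Lp.coeFn_nonneg u).2 hu, (Lp.coeFn_nonneg v).2 hv, h]
      with x hx h1 h2 h3
    rw [hx] at h3
    simp only [Pi.inf_apply, Pi.zero_apply] at h3
    simp only [Pi.zero_apply]
    rcases le_total (u x) (v x) with h5 | h5
    · rw [min_eq_left h5] at h3
      rw [h3, zero_mul]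
    · rw [min_eq_right h5] at h3
      rw [h3, mul_zero]
  rw [integral_congr_ae hzero]
  simp

private lemma eq_zero_of_le_of_inner' {x v : Lp ℝ 2 μ} (hx : 0 ≤ x) (hxv : x ≤ v)
    (h : inner (𝕜 := ℝ) x v = 0) : x = 0 := by
  have h1 : inner (𝕜 := ℝ) x x ≤ inner (𝕜 := ℝ) x v := by
    rw [inner_L2_eq', inner_L2_eq']
    refine integral_mono_ae (integrable_mul' x x) (integrable_mul' x v) ?_
    filter_upwards [(Lp.coeFn_nonneg x).2 hx, (Lp.coeFn_le x v).2 hxv] with y h2 h3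
    exact mul_le_mul_of_nonneg_left h3 h2
  have h2 : inner (𝕜 := ℝ) x x = 0 :=
    le_antisymm (h ▸ h1) real_inner_self_nonneg
  exact inner_self_eq_zero.1 h2

/-- Key propagation lemma: if the pairing vanishes at time `α + β + 2ε`, it vanishes at
time `α + β`. -/
private lemma key_step
    (S : ℝ → Lp ℝ 2 μ →L[ℝ] Lp ℝ 2 μ)
    (hsemi : ∀ s : ℝ, 0 < s → ∀ t : ℝ, 0 < t → S (s + t) = (S s).comp (S t))
    (hsa : ∀ t : ℝ, 0 < t → ∀ f g : Lp ℝ 2 μ,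
      inner (𝕜 := ℝ) (S t f) g = inner (𝕜 := ℝ) f (S t g))
    (hpos : ∀ t : ℝ, 0 < t → ∀ f : Lp ℝ 2 μ, 0 ≤ f → 0 ≤ S t f)
    (a b : Lp ℝ 2 μ) (ha : 0 ≤ a) (hb : 0 ≤ b)
    (α β ε : ℝ) (hα : 0 < α) (hε : 0 < ε) (hεβ : ε < β)
    (h : inner (𝕜 := ℝ) (S (α + β + 2 * ε) a) b = 0) :
    inner (𝕜 := ℝ) (S (α + β) a) b = 0 := by
  have hβ : 0 < β := hε.trans hεβ
  have hmono : ∀ (t : ℝ), 0 < t → ∀ u w : Lp ℝ 2 μ, u ≤ w → S t u ≤ S t w := by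
    intro t ht u w huw
    have h' := hpos t ht (w - u) (sub_nonneg.2 huw)
    rw [map_sub] at h'
    exact sub_nonneg.1 h'
  have hsplit : ∀ s t : ℝ, 0 < s → 0 < t →
      inner (𝕜 := ℝ) (S (s + t) a) b = inner (𝕜 := ℝ) (S s a) (S t b) := by
    intro s t hs ht
    have e : S (s + t) a = S t (S s a) := by
      rw [add_comm s t, hsemi t ht s hs]; rfl
    rw [e, hsa t ht]
  have hu : 0 ≤ S α a := hpos α hα a ha
  have hv : 0 ≤ S β b := hpos β hβ b hb
  have hpq0 : inner (𝕜 := ℝ) (S (α + ε) a) (S (β + ε) b) = 0 := by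
    rw [← hsplit (α + ε) (β + ε) (by linarith) (by linarith),
      show α + ε + (β + ε) = α + β + 2 * ε by ring]
    exact h
  have hpq : (S (α + ε) a) ⊓ (S (β + ε) b) = 0 :=
    inf_eq_zero_of_inner_eq_zero' (hpos _ (by linarith) a ha) (hpos _ (by linarith) b hb) hpq0
  set x : Lp ℝ 2 μ := (S α a) ⊓ (S β b) with hxdef
  have hx0 : 0 ≤ x := le_inf hu hv
  have hle1 : S ε x ≤ S (α + ε) a := by
    have e : S (α + ε) a = S ε (S α a) := by
      rw [add_comm α ε, hsemi ε hε α hα]; rfl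
    rw [e]
    exact hmono ε hε _ _ inf_le_left
  have hle2 : S ε x ≤ S (β + ε) b := by
    have e : S (β + ε) b = S ε (S β b) := by
      rw [add_comm β ε, hsemi ε hε β hβ]; rfl
    rw [e]
    exact hmono ε hε _ _ inf_le_right
  have hSεx : S ε x = 0 :=
    le_antisymm (le_trans (le_inf hle1 hle2) hpq.le) (hpos ε hε x hx0)
  have hSβx : S β x = 0 := by
    have e : S β x = S (β - ε) (S ε x) := by
      rw [show β = β - ε + ε by ring, hsemi (β - ε) (by linarith) ε hε]
      have e2 : β - ε + ε = β := by ring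
      rw [e2]; rfl
    rw [e, hSεx, map_zero]
  have hxv : inner (𝕜 := ℝ) x (S β b) = 0 := by
    rw [← hsa β hβ x b, hSβx, inner_zero_left]
  have hxzero : x = 0 := eq_zero_of_le_of_inner' hx0 inf_le_right hxv
  have hinf : (S α a) ⊓ (S β b) = 0 := by rw [← hxdef]; exact hxzero
  rw [hsplit α β hα hβ]
  exact inner_eq_zero_of_inf_eq_zero' hu hv hinf

end AuxSemigroup

/-- Let `S` be a positivity-preserving self-adjoint semigroup on `L₂(X)` over a
σ-finite measure space, such that `z ↦ (S_z 𝟙_A, 𝟙_B)` extends analytically to the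
open right half-plane (as it does for `S_t = e^{-tH}` with `H` positive self-adjoint).
If `A, B` have finite measure and `(S_t 𝟙_A, 𝟙_B) = 0` for one `t > 0`, then
`(S_t 𝟙_A, 𝟙_B) = 0` for all `t > 0`. -/
theorem semigroup_indicator_inner_zero {X : Type*} [MeasurableSpace X]
    (μ : Measure X) [SigmaFinite μ]
    (S : ℝ → Lp ℝ 2 μ →L[ℝ] Lp ℝ 2 μ)
    (hsemi : ∀ s : ℝ, 0 < s → ∀ t : ℝ, 0 < t → S (s + t) = (S s).comp (S t))
    (hsa : ∀ t : ℝ, 0 < t → ∀ f g : Lp ℝ 2 μ,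
      inner (𝕜 := ℝ) (S t f) g = inner (𝕜 := ℝ) f (S t g))
    (hpos : ∀ t : ℝ, 0 < t → ∀ f : Lp ℝ 2 μ, 0 ≤ f → 0 ≤ S t f)
    (A B : Set X) (hA : MeasurableSet A) (hB : MeasurableSet B)
    (hAfin : μ A ≠ ⊤) (hBfin : μ B ≠ ⊤)
    (F : ℂ → ℂ)
    (hF : DifferentiableOn ℂ F {z : ℂ | 0 < z.re})
    (hFt : ∀ t : ℝ, 0 < t →
      F t = (inner (𝕜 := ℝ) (S t (indicatorConstLp 2 hA hAfin (1 : ℝ)))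
        (indicatorConstLp 2 hB hBfin (1 : ℝ)) : ℝ))
    (t₀ : ℝ) (ht₀ : 0 < t₀)
    (h0 : inner (𝕜 := ℝ) (S t₀ (indicatorConstLp 2 hA hAfin (1 : ℝ)))
      (indicatorConstLp 2 hB hBfin (1 : ℝ)) = (0 : ℝ)) :
    ∀ t : ℝ, 0 < t →
      inner (𝕜 := ℝ) (S t (indicatorConstLp 2 hA hAfin (1 : ℝ)))
        (indicatorConstLp 2 hB hBfin (1 : ℝ)) = (0 : ℝ) := by
  intro t ht
  set a : Lp ℝ 2 μ := indicatorConstLp 2 hA hAfin (1 : ℝ) with hadef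
  set b : Lp ℝ 2 μ := indicatorConstLp 2 hB hBfin (1 : ℝ) with hbdef
  have ha : 0 ≤ a := by
    rw [← Lp.coeFn_nonneg]
    filter_upwards [indicatorConstLp_coeFn (p := 2) (hs := hA) (hμs := hAfin) (c := (1 : ℝ))]
      with x hx
    rw [hadef, hx]
    exact Set.indicator_nonneg (fun _ _ => zero_le_one) x
  have hb : 0 ≤ b := by
    rw [← Lp.coeFn_nonneg]
    filter_upwards [indicatorConstLp_coeFn (p := 2) (hs := hB) (hμs := hBfin) (c := (1 : ℝ))]
      with x hx
    rw [hbdef, hx]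
    exact Set.indicator_nonneg (fun _ _ => zero_le_one) x
  -- vanishing on the interval (t₀/2, t₀)
  have hzero : ∀ m : ℝ, t₀ / 2 < m → m < t₀ → inner (𝕜 := ℝ) (S m a) b = 0 := by
    intro m h1 h2
    have hm : (0 : ℝ) < m := lt_trans (by linarith) h1
    have hk := key_step S hsemi hsa hpos a b ha hb (m / 2) (m / 2) ((t₀ - m) / 2)
      (by linarith) (by linarith) (by linarith) ?_
    · rw [show m / 2 + m / 2 = m by ring] at hk
      exact hk
    · rw [show m / 2 + m / 2 + 2 * ((t₀ - m) / 2) = t₀ by ring]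
      exact h0
  -- identity theorem
  have hopen : IsOpen {z : ℂ | 0 < z.re} := isOpen_lt continuous_const Complex.continuous_re
  have han : AnalyticOnNhd ℂ F {z : ℂ | 0 < z.re} := hF.analyticOnNhd hopen
  have hpre : IsPreconnected {z : ℂ | 0 < z.re} := (convex_halfSpace_re_gt 0).isPreconnected
  set z₀ : ℂ := ((3 / 4 * t₀ : ℝ) : ℂ) with hz₀def
  have hz₀ : z₀ ∈ {z : ℂ | 0 < z.re} := by
    simp only [hz₀def, Set.mem_setOf_eq, Complex.ofReal_re]
    linarith
  have hfreq : ∃ᶠ z in nhdsWithin z₀ {z₀}ᶜ, F z = 0 := by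
    have hseq : Filter.Tendsto (fun n : ℕ => (((3 / 4 * t₀ + t₀ / (8 * (n + 1))) : ℝ) : ℂ))
        Filter.atTop (nhdsWithin z₀ {z₀}ᶜ) := by
      apply tendsto_nhdsWithin_of_tendsto_nhds_of_eventually_within
      · have h0' : Filter.Tendsto (fun n : ℕ => (t₀ / (8 * ((n : ℝ) + 1)) : ℝ))
            Filter.atTop (nhds 0) := by
          apply Filter.Tendsto.div_atTop (tendsto_const_nhds)
          apply Filter.Tendsto.const_mul_atTop (by norm_num : (0:ℝ) < 8)
          exact Filter.tendsto_atTop_add_const_right _ 1 tendsto_natCast_atTop_atTop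
        have hr : Filter.Tendsto (fun n : ℕ => (3 / 4 * t₀ + t₀ / (8 * ((n : ℝ) + 1)) : ℝ))
            Filter.atTop (nhds (3 / 4 * t₀)) := by
          simpa using (Filter.Tendsto.const_add (3 / 4 * t₀) h0')
        exact (Complex.continuous_ofReal.tendsto _).comp hr
      · apply Filter.Eventually.of_forall
        intro n
        simp only [Set.mem_compl_iff, Set.mem_singleton_iff, hz₀def]
        intro hcontra
        have h' := Complex.ofReal_inj.1 hcontra
        have hp : 0 < t₀ / (8 * ((n : ℝ) + 1)) := by positivity
        linarith
    refine hseq.frequently (Filter.Eventually.of_forall ?_).frequently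
    intro n
    have hp : 0 < t₀ / (8 * ((n : ℝ) + 1)) := by positivity
    have hub : t₀ / (8 * ((n : ℝ) + 1)) ≤ t₀ / 8 := by
      apply div_le_div_of_nonneg_left ht₀.le (by norm_num)
      have hn : (0:ℝ) ≤ (n : ℝ) := Nat.cast_nonneg n
      linarith
    have hrpos : 0 < (3 / 4 * t₀ + t₀ / (8 * ((n : ℝ) + 1)) : ℝ) := by linarith
    rw [hFt _ hrpos, hzero _ (by linarith) (by linarith)]
    simp
  have hEq := han.eqOn_zero_of_preconnected_of_frequently_eq_zero hpre hz₀ hfreq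
  have hmem : (t : ℂ) ∈ {z : ℂ | 0 < z.re} := by
    simp only [Set.mem_setOf_eq, Complex.ofReal_re]
    exact ht
  have hFt0 : F t = 0 := hEq hmem
  rw [hFt t ht] at hFt0
  exact_mod_cast hFt0
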